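/- Let g be a symmetric invertible 4×4 real matrix with inverse entries g^{αβ}, ϱ := √|det g|, and p_α^{βγ,μ} := ϱ (δ^μ_α g^{βγ} - δ^β_α g^{μγ}). Setting p^{αβ} := Σ_ν p_ν^{να,β}, the following identities hold for all α, β, γ, μ: (i) p_α^{βγ,μ} = (1/3) δ^β_α p^{μγ} - (1/3) δ^μ_α p^{βγ}; (ii) p^{αβ} = p^{βα}. -/
import Mathlib


theorem stmt_6 (g : Matrix (Fin 4) (Fin 4) ℝ) (hg : g.IsSymm) (hdet : g.det ≠ 0)
    (ϱ : ℝ) (hϱ : ϱ = Real.sqrt |g.det|)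
    (p : Fin 4 → Fin 4 → Fin 4 → Fin 4 → ℝ)
    (hp : ∀ α β γ μ, p α β γ μ =
      ϱ * ((if μ = α then (1:ℝ) else 0) * g⁻¹ β γ - (if β = α then (1:ℝ) else 0) * g⁻¹ μ γ))
    (P : Fin 4 → Fin 4 → ℝ)
    (hP : ∀ α β, P α β = ∑ ν, p ν ν α β) :
    (∀ α β γ μ, p α β γ μ =
      (1/3) * (if β = α then (1:ℝ) else 0) * P μ γ - (1/3) * (if μ = α then (1:ℝ) else 0) * P β γ) ∧
    (∀ α β, P α β = P β α) := by
  have hginv : (g⁻¹).IsSymm := by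
    unfold Matrix.IsSymm
    rw [Matrix.transpose_nonsing_inv, hg.eq]
  have hPval : ∀ a b, P a b = -3 * ϱ * g⁻¹ b a := by
    intro a b
    rw [hP]
    simp only [hp]
    fin_cases b <;> simp [Fin.sum_univ_four] <;> norm_num [Fin.ext_iff] <;> ring
  constructor
  · intro α β γ μ
    rw [hp, hPval, hPval, hginv.apply μ γ, hginv.apply β γ]
    ring
  · intro a b
    rw [hPval, hPval, hginv.apply b a]
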